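/- In any stable matching M of the extended instance I'_{3,3}(B), every hospital in Z ∪ C' is matched and every resident in P ∪ T ∪ Q is matched, where Z = {z_j^r : 1≤j≤m, 1≤r≤5}, C' = {c_j^s : 1≤j≤m, 1≤s≤3}, P = {p_j^s : 1≤j≤m, 1≤s≤6}, Q = {q_j : 1≤j≤m} and T = {t_j : 1≤j≤m}. -/

import Mathlib

/-- A one-to-one HRC instance: residents are partitioned into single residents and
ordered couples; all hospitals have capacity 1. -/
structure HRC1 (R H : Type) where
  singles : List R
  couples : List (R × R)
  singlePref : R → List H
  couplePref : R × R → List (H × H)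
  hospPref : H → List R

namespace HRC1

/-- `x` precedes `y` on the strict preference list `l`. -/
def Prefers {α : Type} [DecidableEq α] (l : List α) (x y : α) : Prop :=
  x ∈ l ∧ y ∈ l ∧ l.idxOf x < l.idxOf y

variable {R H : Type} [DecidableEq R] [DecidableEq H]

/-- `M` is a matching of the instance `I`. -/
def IsMatching (I : HRC1 R H) (M : R → Option H) : Prop :=
  (∀ r₁ r₂ h, M r₁ = some h → M r₂ = some h → r₁ = r₂) ∧
  (∀ r ∈ I.singles, ∀ h, M r = some h → h ∈ I.singlePref r) ∧
  (∀ c ∈ I.couples,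
    (M c.1 = none ∧ M c.2 = none) ∨
    ∃ hp ∈ I.couplePref c, M c.1 = some hp.1 ∧ M c.2 = some hp.2) ∧
  (∀ r, (M r).isSome → r ∈ I.singles ∨ ∃ c ∈ I.couples, r = c.1 ∨ r = c.2)

/-- Hospital `h` is unmatched in `M`. -/
def HospFree (M : R → Option H) (h : H) : Prop := ∀ r, M r ≠ some h

/-- Hospital `h` is unmatched in `M`, or prefers `r` to its current assignee. -/
def HospOpenFor (I : HRC1 R H) (M : R → Option H) (h : H) (r : R) : Prop :=
  HospFree M h ∨ ∃ r', M r' = some h ∧ Prefers (I.hospPref h) r r'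

/-- Blocking pair consisting of a single resident `r` and a hospital `h`. -/
def BlockSingle (I : HRC1 R H) (M : R → Option H) (r : R) (h : H) : Prop :=
  r ∈ I.singles ∧ h ∈ I.singlePref r ∧
  (M r = none ∨ ∃ h', M r = some h' ∧ Prefers (I.singlePref r) h h') ∧
  I.HospOpenFor M h r

/-- Blocking pair consisting of a couple `c` and a pair of hospitals `hp` on its joint list. -/
def BlockCouple (I : HRC1 R H) (M : R → Option H) (c : R × R) (hp : H × H) : Prop :=
  c ∈ I.couples ∧ hp ∈ I.couplePref c ∧
  ((M c.1 = none ∧ M c.2 = none) ∨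
    ∃ hp' ∈ I.couplePref c, M c.1 = some hp'.1 ∧ M c.2 = some hp'.2 ∧
      Prefers (I.couplePref c) hp hp') ∧
  (M c.1 = some hp.1 ∨ I.HospOpenFor M hp.1 c.1) ∧
  (M c.2 = some hp.2 ∨ I.HospOpenFor M hp.2 c.2)

/-- `M` is a stable matching of the instance `I`. -/
def Stable (I : HRC1 R H) (M : R → Option H) : Prop :=
  I.IsMatching M ∧ (∀ r h, ¬ I.BlockSingle M r h) ∧ (∀ c hp, ¬ I.BlockCouple M c hp)

end HRC1

/-- An instance of (2,2)-E3-SAT: `m` clauses, each with exactly 3 literals over `n`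
variables (a literal is a variable together with a polarity, `true` for positive);
`occ l` enumerates the two occurrences of the literal `l`, so that each of the literals
`vᵢ` and `¬vᵢ` appears exactly twice. -/
structure E3SAT (n m : ℕ) where
  clause : Fin m → Fin 3 → Fin n × Bool
  occ : Fin n × Bool → Fin 2 → Fin m × Fin 3
  occ_spec : ∀ l r, clause (occ l r).1 (occ l r).2 = l
  occ_inj : ∀ l, occ l 0 ≠ occ l 1
  occ_surj : ∀ j s, ∃ r, occ (clause j s) r = (j, s)

namespace E3SAT

variable {n m : ℕ}

/-- `B` is satisfiable. -/
def Satisfiable (B : E3SAT n m) : Prop :=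
  ∃ f : Fin n → Bool, ∀ j : Fin m, ∃ s : Fin 3, f (B.clause j s).1 = (B.clause j s).2

/-- The index (`0` or `1`) of the occurrence of its literal that position `s` of
clause `j` constitutes. -/
def rIdx (B : E3SAT n m) (j : Fin m) (s : Fin 3) : Fin 2 :=
  if B.occ (B.clause j s) 0 = (j, s) then 0 else 1

end E3SAT

/-- Residents of the extended instance `I′₃₃(B)`: `X i r = x_{4i+r}`, `K i r = k_{4i+r}`,
`P j s = p_j^{s+1}`, `Q j = q_{j+1}`, `T j = t_{j+1}`, `U i r s = u^{s+1}_{4i+r}`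
(0-based indices). -/
inductive Res3E (n m : ℕ)
  | X (i : Fin n) (r : Fin 4)
  | K (i : Fin n) (r : Fin 4)
  | P (j : Fin m) (s : Fin 6)
  | Q (j : Fin m)
  | T (j : Fin m)
  | U (i : Fin n) (r : Fin 4) (s : Fin 5)
deriving DecidableEq

/-- Hospitals of the extended instance `I′₃₃(B)`: `Y i r = y_{4i+r}`, `L i r = l_{4i+r}`,
`C j s = c_j^{s+1}`, `Z j r = z_j^{r+1}`, `Hh i r s = h^{s+1}_{4i+r}` (0-based indices). -/
inductive Hos3E (n m : ℕ)
  | Y (i : Fin n) (r : Fin 4)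
  | L (i : Fin n) (r : Fin 4)
  | C (j : Fin m) (s : Fin 3)
  | Z (j : Fin m) (r : Fin 5)
  | Hh (i : Fin n) (r : Fin 4) (s : Fin 4)
deriving DecidableEq

variable {n m : ℕ}

/-- The hospital `c(x_{4i+r})`: for `r ∈ {0,1}` the clause hospital of the `(r+1)`-th
occurrence of `vᵢ`; for `r ∈ {2,3}` that of the `(r−1)`-th occurrence of `¬vᵢ`. -/
def cX (B : E3SAT n m) (i : Fin n) (r : Fin 4) : Hos3E n m :=
  have hr := r.isLt
  let o := B.occ (i, decide (r.val < 2)) ⟨r.val % 2, by omega⟩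
  Hos3E.C o.1 o.2

/-- The resident `x(c_j^{s+1})` corresponding to the literal at position `s` of
clause `c_j`. -/
def xOfC (B : E3SAT n m) (j : Fin m) (s : Fin 3) : Res3E n m :=
  let l := B.clause j s
  have hv : (B.rIdx j s).val < 2 := (B.rIdx j s).isLt
  if l.2 then Res3E.X l.1 ⟨(B.rIdx j s).val, by omega⟩
  else Res3E.X l.1 ⟨(B.rIdx j s).val + 2, by omega⟩

/-- The extended one-to-one HRC instance `I′₃₃(B)` constructed from the
(2,2)-E3-SAT instance `B`. -/
def instI33E (B : E3SAT n m) : HRC1 (Res3E n m) (Hos3E n m) where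
  singles :=
    ((List.finRange m).map fun j => Res3E.Q j) ++
    ((List.finRange m).map fun j => Res3E.T j) ++
    ((List.finRange n).flatMap fun i =>
      (List.finRange 4).map fun r => Res3E.U i r 4)
  couples :=
    ((List.finRange n).flatMap fun i =>
      (List.finRange 4).map fun r => (Res3E.X i r, Res3E.K i r)) ++
    ((List.finRange m).flatMap fun j =>
      (List.finRange 3).map fun s =>
        (Res3E.P j ⟨s.val, by have := s.isLt; omega⟩,
         Res3E.P j ⟨s.val + 3, by have := s.isLt; omega⟩)) ++
    ((List.finRange n).flatMap fun i =>
      (List.finRange 4).flatMap fun r =>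
        [(Res3E.U i r 0, Res3E.U i r 1), (Res3E.U i r 2, Res3E.U i r 3)])
  singlePref := fun r => match r with
    | Res3E.Q j => [Hos3E.C j 0, Hos3E.C j 1, Hos3E.C j 2]
    | Res3E.T j => [Hos3E.Z j 2, Hos3E.Z j 3, Hos3E.Z j 4]
    | Res3E.U i r s => if s = 4 then [Hos3E.Y i r, Hos3E.Hh i r 0] else []
    | _ => []
  couplePref := fun c => match c with
    | (Res3E.X i r, Res3E.K i' r') =>
        if i' = i ∧ r' = r then
          if r = 0 then
            [(Hos3E.Y i 0, Hos3E.L i 0), (cX B i 0, Hos3E.L i 1),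
             (Hos3E.Y i 1, Hos3E.L i 1)]
          else if r = 1 then
            [(Hos3E.Y i 1, Hos3E.L i 1), (cX B i 1, Hos3E.L i 2),
             (Hos3E.Y i 2, Hos3E.L i 2)]
          else if r = 2 then
            [(Hos3E.Y i 3, Hos3E.L i 3), (cX B i 2, Hos3E.L i 2),
             (Hos3E.Y i 2, Hos3E.L i 2)]
          else
            [(Hos3E.Y i 0, Hos3E.L i 0), (cX B i 3, Hos3E.L i 3),
             (Hos3E.Y i 3, Hos3E.L i 3)]
        else []
    | (Res3E.P j s, Res3E.P j' s') =>
        if hc : j' = j ∧ s.val < 3 ∧ s'.val = s.val + 3 then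
          [(Hos3E.Z j 0, Hos3E.Z j 1),
           (Hos3E.C j ⟨s.val, hc.2.1⟩, Hos3E.Z j ⟨s.val + 2, by have := hc.2.1; omega⟩)]
        else []
    | (Res3E.U i r s, Res3E.U i' r' s') =>
        if i' = i ∧ r' = r then
          if s = 0 ∧ s' = 1 then [(Hos3E.Hh i r 0, Hos3E.Hh i r 1)]
          else if s = 2 ∧ s' = 3 then
            [(Hos3E.Hh i r 0, Hos3E.Hh i r 3), (Hos3E.Hh i r 2, Hos3E.Hh i r 1)]
          else []
        else []
    | _ => []
  hospPref := fun hh => match hh with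
    | Hos3E.Y i r =>
        (if r = 0 then [Res3E.X i 0, Res3E.X i 3]
         else if r = 1 then [Res3E.X i 1, Res3E.X i 0]
         else if r = 2 then [Res3E.X i 1, Res3E.X i 2]
         else [Res3E.X i 2, Res3E.X i 3]) ++ [Res3E.U i r 4]
    | Hos3E.L i r =>
        if r = 0 then [Res3E.K i 3, Res3E.K i 0]
        else if r = 1 then [Res3E.K i 0, Res3E.K i 1]
        else if r = 2 then [Res3E.K i 2, Res3E.K i 1]
        else [Res3E.K i 3, Res3E.K i 2]
    | Hos3E.C j s =>
        [Res3E.P j ⟨s.val, by have := s.isLt; omega⟩, xOfC B j s, Res3E.Q j]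
    | Hos3E.Z j r =>
        if r = 0 then [Res3E.P j 0, Res3E.P j 1, Res3E.P j 2]
        else if r = 1 then [Res3E.P j 5, Res3E.P j 4, Res3E.P j 3]
        else if r = 2 then [Res3E.P j 3, Res3E.T j]
        else if r = 3 then [Res3E.P j 4, Res3E.T j]
        else [Res3E.P j 5, Res3E.T j]
    | Hos3E.Hh i r s =>
        if s = 0 then [Res3E.U i r 4, Res3E.U i r 0, Res3E.U i r 2]
        else if s = 1 then [Res3E.U i r 3, Res3E.U i r 1]
        else if s = 2 then [Res3E.U i r 2]
        else [Res3E.U i r 3]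


namespace HRC1
variable {α : Type} [DecidableEq α]
lemma prefers_head (x y : α) (l : List α) (hy : y ∈ l) (hne : x ≠ y) :
    Prefers (x::l) x y := by
  refine ⟨List.mem_cons_self, List.mem_cons_of_mem _ hy, ?_⟩
  rw [List.idxOf_cons_self, List.idxOf_cons_ne _ hne]
  omega

lemma prefers_second (a x y : α) (l : List α) (hy : y ∈ l) (hxa : a ≠ x) (hya : a ≠ y)
    (hxy : x ≠ y) : Prefers (a::x::l) x y := by
  refine ⟨List.mem_cons_of_mem _ (List.mem_cons_self),
    List.mem_cons_of_mem _ (List.mem_cons_of_mem _ hy), ?_⟩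
  rw [List.idxOf_cons_ne _ hxa, List.idxOf_cons_ne _ hya,
    List.idxOf_cons_self, List.idxOf_cons_ne _ hxy]
  omega
end HRC1

section Aux
variable {n m : ℕ}

lemma xOfC_cX (B : E3SAT n m) (i : Fin n) (r : Fin 4) {j : Fin m} {s : Fin 3}
    (h : cX B i r = Hos3E.C j s) : xOfC B j s = Res3E.X i r := by
  have hr4 := r.isLt
  unfold cX at h
  injection h with h1 h2
  have hocc : B.occ (i, decide (r.val < 2)) ⟨r.val % 2, by omega⟩ = (j, s) :=
    Prod.ext h1 h2
  have hcl : B.clause j s = (i, decide (r.val < 2)) := by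
    have := B.occ_spec (i, decide (r.val < 2)) ⟨r.val % 2, by omega⟩
    rwa [hocc] at this
  have hm2 : r.val % 2 < 2 := Nat.mod_lt _ (by norm_num)
  have hr : (B.rIdx j s).val = r.val % 2 := by
    unfold E3SAT.rIdx
    rw [hcl]
    rcases (by omega : r.val % 2 = 0 ∨ r.val % 2 = 1) with h0 | h0
    · have h0' : (⟨r.val % 2, by omega⟩ : Fin 2) = 0 := by
        apply Fin.ext; simpa using h0
      rw [h0'] at hocc
      rw [if_pos hocc]
      simp [h0]
    · have h1' : (⟨r.val % 2, by omega⟩ : Fin 2) = 1 := by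
        apply Fin.ext; simpa using h0
      rw [h1'] at hocc
      rw [if_neg]
      · simp [h0]
      · intro hcon
        exact B.occ_inj (i, decide (r.val < 2)) (by rw [hcon, hocc])
  have hxo : xOfC B j s = (if (B.clause j s).2 then
      Res3E.X (B.clause j s).1 ⟨(B.rIdx j s).val, by have := (B.rIdx j s).isLt; omega⟩
      else Res3E.X (B.clause j s).1 ⟨(B.rIdx j s).val + 2,
        by have := (B.rIdx j s).isLt; omega⟩) := rfl
  rw [hxo, hcl]
  by_cases hlt : r.val < 2
  · rw [if_pos (by simpa using hlt)]
    exact congrArg _ (Fin.ext (by simp only [hr]; omega))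
  · rw [if_neg (by simpa using hlt)]
    exact congrArg _ (Fin.ext (by simp only [hr]; omega))

lemma cX_exists (B : E3SAT n m) (i : Fin n) (r : Fin 4) :
    ∃ j s, cX B i r = Hos3E.C j s := ⟨_, _, rfl⟩

variable {B : E3SAT n m} {M : Res3E n m → Option (Hos3E n m)}

lemma X_mem_cX (B : E3SAT n m) (i : Fin n) (r : Fin 4) :
    Res3E.X i r ∈ (instI33E B).hospPref (cX B i r) := by
  obtain ⟨j, s, hjs⟩ := cX_exists B i r
  have hx := xOfC_cX B i r hjs
  rw [hjs]
  simp [instI33E, hx]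

lemma couplePrefP (B : E3SAT n m) (j : Fin m) (s : Fin 3) :
    (instI33E B).couplePref
        (Res3E.P j ⟨s.val, by omega⟩, Res3E.P j ⟨s.val + 3, by omega⟩) =
      [(Hos3E.Z j 0, Hos3E.Z j 1),
       (Hos3E.C j ⟨s.val, s.isLt⟩, Hos3E.Z j ⟨s.val + 2, by omega⟩)] := by
  simp [instI33E]

lemma occupant_mem (hM : (instI33E B).Stable M) {res : Res3E n m} {h : Hos3E n m}
    (hres : M res = some h) : res ∈ (instI33E B).hospPref h := by
  obtain ⟨⟨hinj, hsing, hcpl, hdom⟩, hnbS, hnbC⟩ := hM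
  rcases hdom res (by simp [hres]) with hs | ⟨c, hc, hmem⟩
  · have hh := hsing res hs h hres
    simp only [instI33E, List.mem_append, List.mem_flatMap, List.mem_map,
      List.mem_finRange, true_and] at hs
    rcases hs with (⟨j, rfl⟩ | ⟨j, rfl⟩) | ⟨i, r, rfl⟩
    · simp only [instI33E, List.mem_cons, List.not_mem_nil, or_false] at hh
      rcases hh with rfl | rfl | rfl <;> simp [instI33E]
    · simp only [instI33E, List.mem_cons, List.not_mem_nil, or_false] at hh
      rcases hh with rfl | rfl | rfl <;> simp [instI33E]
    · simp only [instI33E, reduceIte, List.mem_cons, List.not_mem_nil, or_false] at hh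
      rcases hh with rfl | rfl
      · fin_cases r <;> simp [instI33E]
      · simp [instI33E]
  · have hc2 := hc
    simp only [instI33E, List.mem_append, List.mem_flatMap, List.mem_map,
      List.mem_finRange, List.mem_cons, List.not_mem_nil, or_false, true_and] at hc2
    rcases hcpl c hc with ⟨hn1, hn2⟩ | ⟨hp, hpmem, hm1, hm2⟩
    · rcases hmem with rfl | rfl
      · rw [hn1] at hres; exact absurd hres (by simp)
      · rw [hn2] at hres; exact absurd hres (by simp)
    rcases hc2 with (⟨i, r, rfl⟩ | ⟨j, s, rfl⟩) | ⟨i, r, rfl | rfl⟩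
    · -- c = (X i r, K i r)
      rcases hmem with rfl | rfl
      · obtain rfl : hp.1 = h := Option.some.inj (hm1.symm.trans hres)
        fin_cases r <;> simp [instI33E] at hpmem <;>
          rcases hpmem with rfl | rfl | rfl <;>
          first
            | exact X_mem_cX _ _ _
            | simp [instI33E]
      · obtain rfl : hp.2 = h := Option.some.inj (hm2.symm.trans hres)
        fin_cases r <;> simp [instI33E] at hpmem <;>
          rcases hpmem with rfl | rfl | rfl <;> simp [instI33E]
    · -- c = (P j s, P j (s+3))
      rw [couplePrefP] at hpmem
      simp only [List.mem_cons, List.not_mem_nil, or_false] at hpmem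
      rcases (by omega : s.val = 0 ∨ s.val = 1 ∨ s.val = 2) with hs | hs | hs <;>
        rcases hmem with rfl | rfl <;>
        [ (obtain rfl : hp.1 = h := Option.some.inj (hm1.symm.trans hres));
          (obtain rfl : hp.2 = h := Option.some.inj (hm2.symm.trans hres));
          (obtain rfl : hp.1 = h := Option.some.inj (hm1.symm.trans hres));
          (obtain rfl : hp.2 = h := Option.some.inj (hm2.symm.trans hres));
          (obtain rfl : hp.1 = h := Option.some.inj (hm1.symm.trans hres));
          (obtain rfl : hp.2 = h := Option.some.inj (hm2.symm.trans hres))] <;>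
        rcases hpmem with rfl | rfl <;>
        simp [instI33E, hs]
    · -- c = (U i r 0, U i r 1)
      simp [instI33E] at hpmem
      rcases hmem with rfl | rfl
      · obtain rfl : hp.1 = h := Option.some.inj (hm1.symm.trans hres)
        subst hpmem; simp [instI33E]
      · obtain rfl : hp.2 = h := Option.some.inj (hm2.symm.trans hres)
        subst hpmem; simp [instI33E]
    · -- c = (U i r 2, U i r 3)
      simp [instI33E] at hpmem
      rcases hmem with rfl | rfl
      · obtain rfl : hp.1 = h := Option.some.inj (hm1.symm.trans hres)
        rcases hpmem with rfl | rfl <;> simp [instI33E]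
      · obtain rfl : hp.2 = h := Option.some.inj (hm2.symm.trans hres)
        rcases hpmem with rfl | rfl <;> simp [instI33E]

lemma yOcc (hM : (instI33E B).Stable M) (i : Fin n) (r : Fin 4) :
    ∃ a : Fin 4, M (Res3E.X i a) = some (Hos3E.Y i r) := by
  obtain ⟨⟨hinj, hsing, hcpl, hdom⟩, hnbS, hnbC⟩ := id hM
  by_contra hno
  push_neg at hno
  have hu5s : Res3E.U i r 4 ∈ (instI33E B).singles := by simp [instI33E]
  have hc12 : (Res3E.U i r 0, Res3E.U i r 1) ∈ (instI33E B).couples := by simp [instI33E]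
  have hc34 : (Res3E.U i r 2, Res3E.U i r 3) ∈ (instI33E B).couples := by simp [instI33E]
  have hp12 : (instI33E B).couplePref (Res3E.U i r 0, Res3E.U i r 1) =
      [(Hos3E.Hh i r 0, Hos3E.Hh i r 1)] := by simp [instI33E]
  have hp34 : (instI33E B).couplePref (Res3E.U i r 2, Res3E.U i r 3) =
      [(Hos3E.Hh i r 0, Hos3E.Hh i r 3), (Hos3E.Hh i r 2, Hos3E.Hh i r 1)] := by
    simp [instI33E]
  have hh1 : (instI33E B).hospPref (Hos3E.Hh i r 0) =
      [Res3E.U i r 4, Res3E.U i r 0, Res3E.U i r 2] := by simp [instI33E]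
  have hh2 : (instI33E B).hospPref (Hos3E.Hh i r 1) =
      [Res3E.U i r 3, Res3E.U i r 1] := by simp [instI33E]
  by_cases hu5Y : M (Res3E.U i r 4) = some (Hos3E.Y i r)
  · -- gadget instability
    -- h4 occupant is u4 only; h3 occupant is u3 only
    have hocc4 : ∀ res, M res = some (Hos3E.Hh i r 3) → res = Res3E.U i r 3 := by
      intro res hres
      have := occupant_mem hM hres
      simpa [instI33E] using this
    have hocc3 : ∀ res, M res = some (Hos3E.Hh i r 2) → res = Res3E.U i r 2 := by
      intro res hres
      have := occupant_mem hM hres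
      simpa [instI33E] using this
    have hocc2 : ∀ res, M res = some (Hos3E.Hh i r 1) →
        res = Res3E.U i r 3 ∨ res = Res3E.U i r 1 := by
      intro res hres
      have := occupant_mem hM hres
      simpa [instI33E] using this
    have hcase1 : (∀ res, M res ≠ some (Hos3E.Hh i r 0)) ∨
        M (Res3E.U i r 0) = some (Hos3E.Hh i r 0) ∨
        M (Res3E.U i r 2) = some (Hos3E.Hh i r 0) := by
      by_cases hf : ∀ res, M res ≠ some (Hos3E.Hh i r 0)
      · exact Or.inl hf
      · push_neg at hf
        obtain ⟨res, hres⟩ := hf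
        have hm := occupant_mem hM hres
        rw [hh1] at hm
        simp only [List.mem_cons, List.not_mem_nil, or_false] at hm
        rcases hm with rfl | rfl | rfl
        · rw [hu5Y] at hres; simp at hres
        · exact Or.inr (Or.inl hres)
        · exact Or.inr (Or.inr hres)
    rcases hcase1 with hf1 | hu1 | hu3
    · -- h1 free
      rcases hcpl _ hc34 with ⟨hn3, hn4⟩ | ⟨hp, hpmem, hm3, hm4⟩
      · refine hnbC (Res3E.U i r 2, Res3E.U i r 3) (Hos3E.Hh i r 0, Hos3E.Hh i r 3)
          ⟨hc34, by rw [hp34]; simp, Or.inl ⟨hn3, hn4⟩, Or.inr (Or.inl hf1),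
            Or.inr (Or.inl ?_)⟩
        intro res hres
        have := hocc4 res hres
        subst this
        rw [hn4] at hres; simp at hres
      · rw [hp34] at hpmem
        simp only [List.mem_cons, List.not_mem_nil, or_false] at hpmem
        rcases hpmem with rfl | rfl
        · exact hf1 _ hm3
        · refine hnbC (Res3E.U i r 2, Res3E.U i r 3) (Hos3E.Hh i r 0, Hos3E.Hh i r 3)
            ⟨hc34, by rw [hp34]; simp, ?_, Or.inr (Or.inl hf1), Or.inr (Or.inl ?_)⟩
          · refine Or.inr ⟨(Hos3E.Hh i r 2, Hos3E.Hh i r 1), by rw [hp34]; simp,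
              hm3, hm4, ?_⟩
            rw [hp34]
            exact HRC1.prefers_head _ _ _ (by simp) (by simp)
          · intro res hres
            have := hocc4 res hres
            subst this
            rw [hm4] at hres
            simp at hres
    · -- u1 at h1
      rcases hcpl _ hc12 with ⟨hn1, hn2⟩ | ⟨hp, hpmem, hm1, hm2⟩
      · rw [hn1] at hu1; simp at hu1
      rw [hp12] at hpmem
      simp only [List.mem_cons, List.not_mem_nil, or_false] at hpmem
      subst hpmem
      rcases hcpl _ hc34 with ⟨hn3, hn4⟩ | ⟨hp', hpmem', hm3, hm4⟩
      · refine hnbC (Res3E.U i r 2, Res3E.U i r 3) (Hos3E.Hh i r 2, Hos3E.Hh i r 1)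
          ⟨hc34, by rw [hp34]; simp, Or.inl ⟨hn3, hn4⟩, Or.inr (Or.inl ?_),
            Or.inr (Or.inr ⟨Res3E.U i r 1, hm2, ?_⟩)⟩
        · intro res hres
          have := hocc3 res hres
          subst this
          rw [hn3] at hres; simp at hres
        · rw [hh2]
          exact HRC1.prefers_head _ _ _ (by simp) (by simp)
      · rw [hp34] at hpmem'
        simp only [List.mem_cons, List.not_mem_nil, or_false] at hpmem'
        rcases hpmem' with rfl | rfl
        · have : Res3E.U i r 2 = Res3E.U i r 0 := hinj _ _ _ hm3 hu1
          simp at this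
        · have : Res3E.U i r 3 = Res3E.U i r 1 := hinj _ _ _ hm4 hm2
          simp at this
    · -- u3 at h1
      rcases hcpl _ hc34 with ⟨hn3, hn4⟩ | ⟨hp, hpmem, hm3, hm4⟩
      · rw [hn3] at hu3; simp at hu3
      rw [hp34] at hpmem
      simp only [List.mem_cons, List.not_mem_nil, or_false] at hpmem
      rcases hpmem with rfl | rfl
      swap
      · rw [hm3] at hu3; simp at hu3
      rcases hcpl _ hc12 with ⟨hn1, hn2⟩ | ⟨hp', hpmem', hm1, hm2⟩
      swap
      · rw [hp12] at hpmem'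
        simp only [List.mem_cons, List.not_mem_nil, or_false] at hpmem'
        subst hpmem'
        have : Res3E.U i r 0 = Res3E.U i r 2 := hinj _ _ _ hm1 hu3
        simp at this
      refine hnbC (Res3E.U i r 0, Res3E.U i r 1) (Hos3E.Hh i r 0, Hos3E.Hh i r 1)
        ⟨hc12, by rw [hp12]; simp, Or.inl ⟨hn1, hn2⟩,
          Or.inr (Or.inr ⟨Res3E.U i r 2, hu3, ?_⟩), Or.inr (Or.inl ?_)⟩
      · rw [hh1]
        exact HRC1.prefers_second _ _ _ _ (by simp) (by simp) (by simp) (by simp)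
      · intro res hres
        rcases hocc2 res hres with rfl | rfl
        · rw [hm4] at hres; simp at hres
        · rw [hn2] at hres; simp at hres
  · -- u5 not at Y i r : then Y i r free, block (u5, Y i r)
    have hfY : ∀ res, M res ≠ some (Hos3E.Y i r) := by
      intro res hres
      have hm := occupant_mem hM hres
      simp only [instI33E, List.mem_append, List.mem_cons, List.not_mem_nil,
        or_false] at hm
      fin_cases r <;> simp at hm <;>
        rcases hm with ((rfl | rfl) | rfl) <;>
        first
          | exact hu5Y hres
          | exact hno _ hres
    have hsp5 : (instI33E B).singlePref (Res3E.U i r 4) =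
        [Hos3E.Y i r, Hos3E.Hh i r 0] := by simp [instI33E]
    refine hnbS (Res3E.U i r 4) (Hos3E.Y i r)
      ⟨hu5s, by rw [hsp5]; simp, ?_, Or.inl hfY⟩
    rcases hm5 : M (Res3E.U i r 4) with _ | h5
    · exact Or.inl rfl
    · have := hsing _ hu5s _ hm5
      rw [hsp5] at this
      simp only [List.mem_cons, List.not_mem_nil, or_false] at this
      rcases this with rfl | rfl
      · exact absurd hm5 hu5Y
      · refine Or.inr ⟨Hos3E.Hh i r 0, rfl, ?_⟩
        rw [hsp5]
        exact HRC1.prefers_head _ _ _ (by simp) (by simp)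

lemma X_not_C (hM : (instI33E B).Stable M) (i : Fin n) (r0 : Fin 4) (j : Fin m)
    (s : Fin 3) : M (Res3E.X i r0) ≠ some (Hos3E.C j s) := by
  intro hcon
  obtain ⟨⟨hinj, hsing, hcpl, hdom⟩, hnbS, hnbC⟩ := id hM
  choose a ha using fun r => yOcc hM i r
  have hainj : Function.Injective a := by
    intro r r' hrr
    have h1 := ha r
    have h2 := ha r'
    rw [hrr] at h1
    rw [h2] at h1
    injection h1 with h1
    injection h1 with _ h1
    exact h1.symm
  obtain ⟨r, hr⟩ := Finite.surjective_of_injective hainj r0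
  have := ha r
  rw [hr, hcon] at this
  simp at this


lemma fin3cases : ∀ x : Fin 3, x = 0 ∨ x = 1 ∨ x = 2 := by decide
lemma fin5cases : ∀ x : Fin 5, x = 0 ∨ x = 1 ∨ x = 2 ∨ x = 3 ∨ x = 4 := by decide
lemma fin6cases : ∀ x : Fin 6, x = 0 ∨ x = 1 ∨ x = 2 ∨ x = 3 ∨ x = 4 ∨ x = 5 := by decide

lemma xOfC_isX (B : E3SAT n m) (j : Fin m) (s : Fin 3) :
    ∃ i' r', xOfC B j s = Res3E.X i' r' := by
  have hxo : xOfC B j s = (if (B.clause j s).2 then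
      Res3E.X (B.clause j s).1 ⟨(B.rIdx j s).val, by have := (B.rIdx j s).isLt; omega⟩
      else Res3E.X (B.clause j s).1 ⟨(B.rIdx j s).val + 2,
        by have := (B.rIdx j s).isLt; omega⟩) := rfl
  rw [hxo]
  split <;> exact ⟨_, _, rfl⟩

lemma isSome_helper {α : Type} {f : α} : ∀ (x : Option α), x = some f → x.isSome :=
  fun x e => by rw [e]; rfl

lemma clause_gadget (hM : (instI33E B).Stable M) (j : Fin m) :
    (∀ r : Fin 5, ∃ res, M res = some (Hos3E.Z j r)) ∧
    (∀ s : Fin 3, ∃ res, M res = some (Hos3E.C j s)) ∧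
    (∀ s : Fin 6, (M (Res3E.P j s)).isSome) ∧
    (M (Res3E.T j)).isSome ∧ (M (Res3E.Q j)).isSome := by
  obtain ⟨⟨hinj, hsing, hcpl, hdom⟩, hnbS, hnbC⟩ := id hM
  have hPc : ∀ s : Fin 3, (Res3E.P j ⟨s.val, by omega⟩, Res3E.P j ⟨s.val + 3, by omega⟩)
      ∈ (instI33E B).couples := by intro s; simp [instI33E]
  have hZ0h : (instI33E B).hospPref (Hos3E.Z j 0) =
      [Res3E.P j 0, Res3E.P j 1, Res3E.P j 2] := by simp [instI33E]
  have hZ1h : (instI33E B).hospPref (Hos3E.Z j 1) =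
      [Res3E.P j 5, Res3E.P j 4, Res3E.P j 3] := by simp [instI33E]
  have hCsh : ∀ s : Fin 3, (instI33E B).hospPref (Hos3E.C j s) =
      [Res3E.P j ⟨s.val, by omega⟩, xOfC B j s, Res3E.Q j] := by
    intro s; simp [instI33E]
  have hZsh : ∀ s : Fin 3, (instI33E B).hospPref (Hos3E.Z j ⟨s.val + 2, by omega⟩) =
      [Res3E.P j ⟨s.val + 3, by omega⟩, Res3E.T j] := by
    intro s
    rcases (by omega : s.val = 0 ∨ s.val = 1 ∨ s.val = 2) with h | h | h <;>
      simp [instI33E, h]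
  have couP : ∀ s : Fin 3,
      (M (Res3E.P j ⟨s.val, by omega⟩) = none ∧
        M (Res3E.P j ⟨s.val + 3, by omega⟩) = none) ∨
      (M (Res3E.P j ⟨s.val, by omega⟩) = some (Hos3E.Z j 0) ∧
        M (Res3E.P j ⟨s.val + 3, by omega⟩) = some (Hos3E.Z j 1)) ∨
      (M (Res3E.P j ⟨s.val, by omega⟩) = some (Hos3E.C j s) ∧
        M (Res3E.P j ⟨s.val + 3, by omega⟩) = some (Hos3E.Z j ⟨s.val + 2, by omega⟩)) := by
    intro s
    rcases hcpl _ (hPc s) with h | ⟨hp, hpmem, h1, h2⟩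
    · exact Or.inl h
    · rw [couplePrefP] at hpmem
      simp only [List.mem_cons, List.not_mem_nil, or_false] at hpmem
      rcases hpmem with rfl | rfl
      · exact Or.inr (Or.inl ⟨h1, h2⟩)
      · exact Or.inr (Or.inr ⟨h1, h2⟩)
  have hex : ∃ a : Fin 3, M (Res3E.P j ⟨a.val, by omega⟩) = some (Hos3E.Z j 0) ∧
      M (Res3E.P j ⟨a.val + 3, by omega⟩) = some (Hos3E.Z j 1) := by
    by_contra hno
    push_neg at hno
    have hz0f : ∀ res, M res ≠ some (Hos3E.Z j 0) := by
      intro res hres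
      have hm := occupant_mem hM hres
      rw [hZ0h] at hm
      simp only [List.mem_cons, List.not_mem_nil, or_false] at hm
      have hex2 : ∃ s : Fin 3, res = Res3E.P j ⟨s.val, by omega⟩ := by
        rcases hm with rfl | rfl | rfl
        exacts [⟨0, rfl⟩, ⟨1, rfl⟩, ⟨2, rfl⟩]
      obtain ⟨s, rfl⟩ := hex2
      rcases couP s with ⟨h1, _⟩ | ⟨h1, h2⟩ | ⟨h1, _⟩
      · rw [h1] at hres; simp at hres
      · exact hno s h1 h2
      · rw [h1] at hres; simp at hres
    have hz1f : ∀ res, M res ≠ some (Hos3E.Z j 1) := by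
      intro res hres
      have hm := occupant_mem hM hres
      rw [hZ1h] at hm
      simp only [List.mem_cons, List.not_mem_nil, or_false] at hm
      have hex2 : ∃ s : Fin 3, res = Res3E.P j ⟨s.val + 3, by omega⟩ := by
        rcases hm with rfl | rfl | rfl
        exacts [⟨2, rfl⟩, ⟨1, rfl⟩, ⟨0, rfl⟩]
      obtain ⟨s, rfl⟩ := hex2
      rcases couP s with ⟨_, h2⟩ | ⟨h1, h2⟩ | ⟨_, h2⟩
      · rw [h2] at hres; simp at hres
      · exact hz0f _ h1
      · rw [h2] at hres
        have hv := Option.some.inj hres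
        injection hv with hv1 hv2
        have hv3 : s.val + 2 = 1 :=
          Fin.mk.inj (hv2 : (⟨s.val + 2, by omega⟩ : Fin 5) = ⟨1, by omega⟩)
        omega
    rcases couP 0 with ⟨h1, h2⟩ | ⟨h1, h2⟩ | ⟨h1, h2⟩
    · exact hnbC (Res3E.P j ⟨(0 : Fin 3).val, by omega⟩,
        Res3E.P j ⟨(0 : Fin 3).val + 3, by omega⟩) (Hos3E.Z j 0, Hos3E.Z j 1)
        ⟨hPc 0, by rw [couplePrefP]; exact List.mem_cons_self, Or.inl ⟨h1, h2⟩,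
          Or.inr (Or.inl hz0f), Or.inr (Or.inl hz1f)⟩
    · exact hno 0 h1 h2
    · exact hnbC (Res3E.P j ⟨(0 : Fin 3).val, by omega⟩,
        Res3E.P j ⟨(0 : Fin 3).val + 3, by omega⟩) (Hos3E.Z j 0, Hos3E.Z j 1)
        ⟨hPc 0, by rw [couplePrefP]; exact List.mem_cons_self,
          Or.inr ⟨(Hos3E.C j 0, Hos3E.Z j ⟨(0 : Fin 3).val + 2, by omega⟩),
            by rw [couplePrefP]; simp, h1, h2,
            by rw [couplePrefP]; exact HRC1.prefers_head _ _ _ (by simp) (by simp)⟩,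
          Or.inr (Or.inl hz0f), Or.inr (Or.inl hz1f)⟩
  obtain ⟨a, ha1, ha2⟩ := hex
  have hS2 : ∀ s : Fin 3, s ≠ a →
      M (Res3E.P j ⟨s.val, by omega⟩) = some (Hos3E.C j s) ∧
      M (Res3E.P j ⟨s.val + 3, by omega⟩) = some (Hos3E.Z j ⟨s.val + 2, by omega⟩) := by
    intro s hsa
    rcases couP s with ⟨h1, h2⟩ | ⟨h1, h2⟩ | h
    · exfalso
      refine hnbC (Res3E.P j ⟨s.val, by omega⟩, Res3E.P j ⟨s.val + 3, by omega⟩)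
        (Hos3E.C j s, Hos3E.Z j ⟨s.val + 2, by omega⟩)
        ⟨hPc s, by rw [couplePrefP]; simp, Or.inl ⟨h1, h2⟩, ?_, ?_⟩
      · right
        by_cases hf : ∀ res, M res ≠ some (Hos3E.C j s)
        · exact Or.inl hf
        · push_neg at hf
          obtain ⟨res, hres⟩ := hf
          refine Or.inr ⟨res, hres, ?_⟩
          have hm := occupant_mem hM hres
          rw [hCsh s] at hm
          simp only [List.mem_cons, List.not_mem_nil, or_false] at hm
          rcases hm with rfl | rfl | rfl
          · rw [h1] at hres; simp at hres
          · rw [hCsh s]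
            refine HRC1.prefers_head _ _ _ (by simp) ?_
            obtain ⟨i', r', hx⟩ := xOfC_isX B j s
            rw [hx]; simp
          · rw [hCsh s]
            exact HRC1.prefers_head _ _ _ (by simp) (by simp)
      · right
        by_cases hf : ∀ res, M res ≠ some (Hos3E.Z j ⟨s.val + 2, by omega⟩)
        · exact Or.inl hf
        · push_neg at hf
          obtain ⟨res, hres⟩ := hf
          refine Or.inr ⟨res, hres, ?_⟩
          have hm := occupant_mem hM hres
          rw [hZsh s] at hm
          simp only [List.mem_cons, List.not_mem_nil, or_false] at hm
          rcases hm with rfl | rfl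
          · rw [h2] at hres; simp at hres
          · rw [hZsh s]
            exact HRC1.prefers_head _ _ _ (by simp) (by simp)
    · exfalso
      apply hsa
      have heq := hinj _ _ _ h1 ha1
      simp only [Res3E.P.injEq, Fin.mk.injEq, true_and] at heq
      exact Fin.ext heq
    · exact h
  have hTs : Res3E.T j ∈ (instI33E B).singles := by simp [instI33E]
  have hTl : (instI33E B).singlePref (Res3E.T j) =
      [Hos3E.Z j 2, Hos3E.Z j 3, Hos3E.Z j 4] := by simp [instI33E]
  have hTZ : M (Res3E.T j) = some (Hos3E.Z j ⟨a.val + 2, by omega⟩) := by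
    by_contra hTne
    have hzf : ∀ res, M res ≠ some (Hos3E.Z j ⟨a.val + 2, by omega⟩) := by
      intro res hres
      have hm := occupant_mem hM hres
      rw [hZsh a] at hm
      simp only [List.mem_cons, List.not_mem_nil, or_false] at hm
      rcases hm with rfl | rfl
      · rw [ha2] at hres
        have hv := Option.some.inj hres
        injection hv with hv1 hv2
        have hv3 : (1 : ℕ) = a.val + 2 :=
          Fin.mk.inj (hv2 : (⟨1, by omega⟩ : Fin 5) = ⟨a.val + 2, by omega⟩)
        omega
      · exact hTne hres
    have hTnone : M (Res3E.T j) = none := by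
      rcases hm5 : M (Res3E.T j) with _ | h5
      · rfl
      · exfalso
        have := hsing _ hTs _ hm5
        rw [hTl] at this
        simp only [List.mem_cons, List.not_mem_nil, or_false] at this
        have hex2 : ∃ s' : Fin 3, h5 = Hos3E.Z j ⟨s'.val + 2, by omega⟩ := by
          rcases this with rfl | rfl | rfl
          exacts [⟨0, rfl⟩, ⟨1, rfl⟩, ⟨2, rfl⟩]
        obtain ⟨s', rfl⟩ := hex2
        by_cases hsa : s' = a
        · subst hsa
          exact hTne hm5
        · have := hinj _ _ _ hm5 (hS2 s' hsa).2
          simp at this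
    refine hnbS (Res3E.T j) (Hos3E.Z j ⟨a.val + 2, by omega⟩)
      ⟨hTs, ?_, Or.inl hTnone, Or.inl hzf⟩
    rw [hTl]
    rcases (by omega : a.val = 0 ∨ a.val = 1 ∨ a.val = 2) with h | h | h <;> simp [h]
  have hQs : Res3E.Q j ∈ (instI33E B).singles := by simp [instI33E]
  have hQl : (instI33E B).singlePref (Res3E.Q j) =
      [Hos3E.C j 0, Hos3E.C j 1, Hos3E.C j 2] := by simp [instI33E]
  have hQC : M (Res3E.Q j) = some (Hos3E.C j a) := by
    by_contra hQne
    have hcf : ∀ res, M res ≠ some (Hos3E.C j a) := by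
      intro res hres
      have hm := occupant_mem hM hres
      rw [hCsh a] at hm
      simp only [List.mem_cons, List.not_mem_nil, or_false] at hm
      rcases hm with rfl | rfl | rfl
      · rw [ha1] at hres; simp at hres
      · obtain ⟨i', r', hx⟩ := xOfC_isX B j a
        rw [hx] at hres
        exact X_not_C hM i' r' j a hres
      · exact hQne hres
    have hQnone : M (Res3E.Q j) = none := by
      rcases hm5 : M (Res3E.Q j) with _ | h5
      · rfl
      · exfalso
        have := hsing _ hQs _ hm5
        rw [hQl] at this
        simp only [List.mem_cons, List.not_mem_nil, or_false] at this
        have hex2 : ∃ s' : Fin 3, h5 = Hos3E.C j s' := by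
          rcases this with rfl | rfl | rfl
          exacts [⟨0, rfl⟩, ⟨1, rfl⟩, ⟨2, rfl⟩]
        obtain ⟨s', rfl⟩ := hex2
        by_cases hsa : s' = a
        · subst hsa
          exact hQne hm5
        · have := hinj _ _ _ hm5 (hS2 s' hsa).1
          simp at this
    refine hnbS (Res3E.Q j) (Hos3E.C j a) ⟨hQs, ?_, Or.inl hQnone, Or.inl hcf⟩
    rw [hQl]
    rcases (fin3cases a) with rfl | rfl | rfl <;> simp
  rcases (fin3cases a) with rfl | rfl | rfl <;>
    refine ⟨?_, ?_, ?_, isSome_helper _ hTZ, isSome_helper _ hQC⟩ <;>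
    [ (intro r; rcases (fin5cases r)
        with rfl | rfl | rfl | rfl | rfl);
      (intro s; rcases (fin3cases s) with rfl | rfl | rfl);
      (intro s; rcases (fin6cases s)
        with rfl | rfl | rfl | rfl | rfl | rfl);
      (intro r; rcases (fin5cases r)
        with rfl | rfl | rfl | rfl | rfl);
      (intro s; rcases (fin3cases s) with rfl | rfl | rfl);
      (intro s; rcases (fin6cases s)
        with rfl | rfl | rfl | rfl | rfl | rfl);
      (intro r; rcases (fin5cases r)
        with rfl | rfl | rfl | rfl | rfl);
      (intro s; rcases (fin3cases s) with rfl | rfl | rfl);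
      (intro s; rcases (fin6cases s)
        with rfl | rfl | rfl | rfl | rfl | rfl)] <;>
    first
      | exact ⟨_, ha1⟩
      | exact ⟨_, ha2⟩
      | exact ⟨_, hTZ⟩
      | exact ⟨_, hQC⟩
      | exact ⟨_, (hS2 0 (by decide)).1⟩
      | exact ⟨_, (hS2 1 (by decide)).1⟩
      | exact ⟨_, (hS2 2 (by decide)).1⟩
      | exact ⟨_, (hS2 0 (by decide)).2⟩
      | exact ⟨_, (hS2 1 (by decide)).2⟩
      | exact ⟨_, (hS2 2 (by decide)).2⟩
      | exact isSome_helper _ ha1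
      | exact isSome_helper _ ha2
      | exact isSome_helper _ (hS2 0 (by decide)).1
      | exact isSome_helper _ (hS2 1 (by decide)).1
      | exact isSome_helper _ (hS2 2 (by decide)).1
      | exact isSome_helper _ (hS2 0 (by decide)).2
      | exact isSome_helper _ (hS2 1 (by decide)).2
      | exact isSome_helper _ (hS2 2 (by decide)).2

end Aux

/-- In any stable matching `M` of the extended instance `I′₃₃(B)`, every hospital in
`Z ∪ C'` is matched and every resident in `P ∪ T ∪ Q` is matched. -/
theorem ZC_and_PTQ_matched {n m : ℕ} (B : E3SAT n m)
    (M : Res3E n m → Option (Hos3E n m)) (hM : (instI33E B).Stable M) :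
    (∀ (j : Fin m) (r : Fin 5), ∃ res, M res = some (Hos3E.Z j r)) ∧
    (∀ (j : Fin m) (s : Fin 3), ∃ res, M res = some (Hos3E.C j s)) ∧
    (∀ (j : Fin m) (s : Fin 6), (M (Res3E.P j s)).isSome) ∧
    (∀ j : Fin m, (M (Res3E.T j)).isSome) ∧
    (∀ j : Fin m, (M (Res3E.Q j)).isSome) := by
  refine ⟨fun j r => ((clause_gadget hM j).1 r),
    fun j s => ((clause_gadget hM j).2.1 s),
    fun j s => ((clause_gadget hM j).2.2.1 s),
    fun j => ((clause_gadget hM j).2.2.2.1),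
    fun j => ((clause_gadget hM j).2.2.2.2)⟩
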